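/- arXiv:2201.08417 — 5 statements merged into one kernel-verified Lean document; each statement's English description precedes it below -/
import Mathlib

section
/- For every subset Y ⊆ {1,…,M}, the determinant of the principal submatrix of the nonsymmetric kernel is bounded by that of the symmetric proposal kernel: det(L_Y) ≤ det(L̂_Y). -/
open Matrix

/-- The block-diagonal matrix `X = diag(ρ₁,…,ρ_K, C₁,…,C_{K/2})` with
`C_j = [[0, σ_j],[−σ_j, 0]]`, of size `2K × 2K` (indices `0,…,K-1` carry the `ρ`'s,
the pair `(K+2j, K+2j+1)` carries the block `C_j`, `0`-indexed). -/
noncomputable def Xmat (K : ℕ) (ρ σ : ℕ → ℝ) : Matrix (Fin (2 * K)) (Fin (2 * K)) ℝ :=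
  Matrix.of fun i j =>
    if (i : ℕ) < K then (if (i : ℕ) = (j : ℕ) then ρ i else 0)
    else if (j : ℕ) < K then 0
    else if ((i : ℕ) - K) / 2 = ((j : ℕ) - K) / 2 then
      (if ((i : ℕ) - K) % 2 = 0 ∧ ((j : ℕ) - K) % 2 = 1 then σ (((i : ℕ) - K) / 2)
       else if ((i : ℕ) - K) % 2 = 1 ∧ ((j : ℕ) - K) % 2 = 0 then -σ (((i : ℕ) - K) / 2)
       else 0)
    else 0

/-- The diagonal matrix `X̂ = diag(ρ₁,…,ρ_K, σ₁, σ₁,…,σ_{K/2}, σ_{K/2})`. -/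
noncomputable def Xhat (K : ℕ) (ρ σ : ℕ → ℝ) : Matrix (Fin (2 * K)) (Fin (2 * K)) ℝ :=
  Matrix.diagonal fun i => if (i : ℕ) < K then ρ i else σ (((i : ℕ) - K) / 2)

/-- Determinant of the principal submatrix of `L` indexed by the subset `Y`
(equal to `1` when `Y = ∅`). -/
noncomputable def pdet {n : ℕ} (L : Matrix (Fin n) (Fin n) ℝ) (Y : Finset (Fin n)) : ℝ :=
  (L.submatrix (fun a : {x // x ∈ Y} => a.1) (fun a : {x // x ∈ Y} => a.1)).det



/-- PSD matrix has nonnegative determinant. -/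
lemma psd_det_nonneg {m : Type*} [Fintype m] [DecidableEq m]
    {T : Matrix m m ℝ} (hT : T.PosSemidef) : 0 ≤ T.det := by
  rw [hT.isHermitian.det_eq_prod_eigenvalues]
  exact Finset.prod_nonneg fun i _ => hT.eigenvalues_nonneg i

/-- If `0 ⪯ T ⪯ 1` then `det T ≤ 1`. -/
lemma det_le_one_of_psd {m : Type*} [Fintype m] [DecidableEq m]
    {T : Matrix m m ℝ} (hT : T.PosSemidef) (h1 : ((1 : Matrix m m ℝ) - T).PosSemidef) :
    T.det ≤ 1 := by
  have hH := hT.isHermitian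
  set U : Matrix m m ℝ := (hH.eigenvectorUnitary : Matrix m m ℝ) with hU
  have hUU : star U * U = 1 := by simp [hU]
  have hUU' : U * star U = 1 := by simp [hU]
  have hspec : T = U * Matrix.diagonal (RCLike.ofReal ∘ hH.eigenvalues) * star U :=
    hH.spectral_theorem
  have hdiag : star U * T * U = Matrix.diagonal (RCLike.ofReal ∘ hH.eigenvalues) := by
    conv_lhs => rw [hspec]
    calc star U * (U * Matrix.diagonal (RCLike.ofReal ∘ hH.eigenvalues) * star U) * U
        = (star U * U) * Matrix.diagonal (RCLike.ofReal ∘ hH.eigenvalues) * (star U * U) := by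
          noncomm_ring
      _ = Matrix.diagonal (RCLike.ofReal ∘ hH.eigenvalues) := by rw [hUU]; simp
  have hPSDdiag : ((1 : Matrix m m ℝ) - Matrix.diagonal (RCLike.ofReal ∘ hH.eigenvalues)).PosSemidef := by
    have := h1.conjTranspose_mul_mul_same (B := U)
    have heq : Uᴴ * (1 - T) * U = 1 - Matrix.diagonal (RCLike.ofReal ∘ hH.eigenvalues) := by
      have h' : Uᴴ = star U := rfl
      rw [h', Matrix.mul_sub, Matrix.mul_one, Matrix.sub_mul, hdiag, hUU]
    rwa [heq] at this
  have hle1 : ∀ i, hH.eigenvalues i ≤ 1 := by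
    intro i
    have h1d : ((1 : Matrix m m ℝ) - Matrix.diagonal (RCLike.ofReal ∘ hH.eigenvalues))
        = Matrix.diagonal (fun i => 1 - hH.eigenvalues i) := by
      rw [← Matrix.diagonal_one, Matrix.diagonal_sub]
      rfl
    rw [h1d] at hPSDdiag
    have := (Matrix.posSemidef_diagonal_iff).mp hPSDdiag i
    linarith
  rw [hH.det_eq_prod_eigenvalues]
  refine Finset.prod_le_one (fun i _ => hT.eigenvalues_nonneg i) (fun i _ => ?_)
  simpa using hle1 i

/-- Determinant monotonicity: `0 ⪯ S ⪯ G` implies `det S ≤ det G`. -/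
lemma det_le_det_of_psd {m : Type*} [Fintype m] [DecidableEq m]
    {S G : Matrix m m ℝ} (hS : S.PosSemidef) (hGS : (G - S).PosSemidef) :
    S.det ≤ G.det := by
  have hG : G.PosSemidef := by
    have := hS.add hGS
    simpa using this
  by_cases hdet : IsUnit G.det
  · open scoped MatrixOrder in set R := CFC.sqrt G with hRdef
    have hRpsd : R.PosSemidef := by open scoped MatrixOrder in exact (CFC.sqrt_nonneg G).posSemidef
    have hRR : R * R = G := by open scoped MatrixOrder in exact CFC.sqrt_mul_sqrt_self G hG.nonneg
    have hRunit : IsUnit R.det := by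
      have : R.det * R.det = G.det := by rw [← Matrix.det_mul, hRR]
      exact isUnit_of_mul_isUnit_left (this ▸ hdet)
    have hRiR : R⁻¹ * R = 1 := Matrix.nonsing_inv_mul R hRunit
    have hRRi : R * R⁻¹ = 1 := Matrix.mul_nonsing_inv R hRunit
    have hRherm : Rᴴ = R := hRpsd.isHermitian
    have hRinvherm : (R⁻¹)ᴴ = R⁻¹ := by
      rw [Matrix.conjTranspose_nonsing_inv, hRherm]
    set T := R⁻¹ * S * (R⁻¹)ᴴ with hTdef
    have hT : T.PosSemidef := hS.mul_mul_conjTranspose_same R⁻¹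
    have hGi : R⁻¹ * G * (R⁻¹)ᴴ = 1 := by
      rw [hRinvherm, ← hRR]
      calc R⁻¹ * (R * R) * R⁻¹ = (R⁻¹ * R) * (R * R⁻¹) := by noncomm_ring
        _ = 1 := by rw [hRiR, hRRi, one_mul]
    have h1T : ((1 : Matrix m m ℝ) - T).PosSemidef := by
      have := hGS.mul_mul_conjTranspose_same R⁻¹
      have heq : R⁻¹ * (G - S) * (R⁻¹)ᴴ = 1 - T := by
        rw [Matrix.mul_sub, Matrix.sub_mul, hGi]
      rwa [heq] at this
    have hdT : T.det ≤ 1 := det_le_one_of_psd hT h1T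
    have hdetT : T.det * G.det = S.det := by
      rw [hTdef, hRinvherm]
      rw [Matrix.det_mul, Matrix.det_mul]
      have hdRi : R⁻¹.det * R.det = 1 := by rw [← Matrix.det_mul, hRiR, Matrix.det_one]
      rw [← hRR, Matrix.det_mul]
      linear_combination S.det * (R⁻¹.det * R.det + 1) * hdRi
    have hGnn : 0 ≤ G.det := psd_det_nonneg hG
    nlinarith [hdT, hdetT, hGnn, psd_det_nonneg hS]
  · have hdG : G.det = 0 := by
      by_contra h
      exact hdet (isUnit_iff_ne_zero.mpr h)
    obtain ⟨v, hv0, hGv⟩ := (Matrix.exists_mulVec_eq_zero_iff).mpr hdG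
    have hSv : S *ᵥ v = 0 := by
      rw [← hS.dotProduct_mulVec_zero_iff v]
      have h1 : (0:ℝ) ≤ dotProduct (star v) (S *ᵥ v) := hS.dotProduct_mulVec_nonneg v
      have h2 : (0:ℝ) ≤ dotProduct (star v) ((G - S) *ᵥ v) := hGS.dotProduct_mulVec_nonneg v
      have h3 : dotProduct (star v) ((G - S) *ᵥ v)
          = dotProduct (star v) (G *ᵥ v) - dotProduct (star v) (S *ᵥ v) := by
        rw [Matrix.sub_mulVec, dotProduct_sub]
      rw [hGv, dotProduct_zero] at h3
      linarith
    have hdS : S.det = 0 := (Matrix.exists_mulVec_eq_zero_iff).mp ⟨v, hv0, hSv⟩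
    rw [hdS, hdG]

/-- If `J` is orthogonal then `det (A J Aᵀ) ≤ det (A Aᵀ)`. -/
lemma det_mul_orth_le {m n : Type*} [Fintype m] [DecidableEq m] [Fintype n] [DecidableEq n]
    (A : Matrix m n ℝ) (J : Matrix n n ℝ) (hJ : J * Jᵀ = 1) :
    (A * J * Aᵀ).det ≤ (A * Aᵀ).det := by
  set G := A * Aᵀ with hGdef
  have hG : G.PosSemidef := by
    have := Matrix.posSemidef_self_mul_conjTranspose A
    rwa [Matrix.conjTranspose_eq_transpose_of_trivial] at this
  have hGnn : 0 ≤ G.det := psd_det_nonneg hG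
  by_cases hdet : IsUnit G.det
  · set N := A * J * Aᵀ with hNdef
    set S := N * G⁻¹ * Nᵀ with hSdef
    have hS : S.PosSemidef := by
      have := hG.inv.mul_mul_conjTranspose_same N
      rwa [Matrix.conjTranspose_eq_transpose_of_trivial] at this
    set P := Aᵀ * G⁻¹ * A with hPdef
    have hGsymm : Gᵀ = G := by
      rw [hGdef, Matrix.transpose_mul, Matrix.transpose_transpose]
    have hGinvsymm : (G⁻¹)ᵀ = G⁻¹ := by
      rw [← Matrix.conjTranspose_eq_transpose_of_trivial, Matrix.conjTranspose_nonsing_inv,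
        Matrix.conjTranspose_eq_transpose_of_trivial, hGsymm]
    have hPsymm : Pᵀ = P := by
      rw [hPdef, Matrix.transpose_mul, Matrix.transpose_mul, Matrix.transpose_transpose,
        hGinvsymm, Matrix.mul_assoc]
    have hGGi : G * G⁻¹ = 1 := Matrix.mul_nonsing_inv G hdet
    have hAA : A * (Aᵀ * (G⁻¹ * A)) = A := by
      rw [← Matrix.mul_assoc A Aᵀ, ← hGdef, ← Matrix.mul_assoc, hGGi, Matrix.one_mul]
    have hPP : P * P = P := by
      rw [hPdef]
      simp only [Matrix.mul_assoc]
      rw [hAA]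
    have h1P : ((1 : Matrix n n ℝ) - P).PosSemidef := by
      have hsq : ((1 : Matrix n n ℝ) - P)ᴴ * (1 - P) = 1 - P := by
        rw [Matrix.conjTranspose_eq_transpose_of_trivial]
        have h2 : ((1 : Matrix n n ℝ) - P)ᵀ = 1 - P := by
          rw [Matrix.transpose_sub, Matrix.transpose_one, hPsymm]
        rw [h2, Matrix.sub_mul, Matrix.one_mul, Matrix.mul_sub, Matrix.mul_one, hPP,
          sub_self, sub_zero]
      have := Matrix.posSemidef_conjTranspose_mul_self ((1 : Matrix n n ℝ) - P)
      rwa [hsq] at this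
    have hGS : (G - S).PosSemidef := by
      have e1 : A * J * (A * J)ᵀ = G := by
        rw [Matrix.transpose_mul]
        simp only [Matrix.mul_assoc]
        rw [← Matrix.mul_assoc J Jᵀ Aᵀ, hJ, Matrix.one_mul]
      have e2 : A * J * P * (A * J)ᵀ = S := by
        rw [hSdef, hNdef, hPdef, Matrix.transpose_mul, Matrix.transpose_mul,
          Matrix.transpose_mul, Matrix.transpose_transpose]
        simp only [Matrix.mul_assoc]
      have key : G - S = (A * J) * (1 - P) * (A * J)ᵀ := by
        rw [Matrix.mul_sub, Matrix.sub_mul, Matrix.mul_one, e1, e2]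
      rw [key]
      have := h1P.mul_mul_conjTranspose_same (A * J)
      rwa [Matrix.conjTranspose_eq_transpose_of_trivial] at this
    have hmono : S.det ≤ G.det := det_le_det_of_psd hS hGS
    have hdS : S.det * G.det = N.det * N.det := by
      rw [hSdef, Matrix.det_mul, Matrix.det_mul, Matrix.det_transpose]
      have hGiG : G⁻¹.det * G.det = 1 := by
        rw [← Matrix.det_mul, Matrix.nonsing_inv_mul G hdet, Matrix.det_one]
      linear_combination N.det * N.det * hGiG
    have hSnn : 0 ≤ S.det := psd_det_nonneg hS
    nlinarith [hmono, hdS, hGnn, hSnn]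
  · have hdG : G.det = 0 := by
      by_contra h
      exact hdet (isUnit_iff_ne_zero.mpr h)
    obtain ⟨v, hv0, hGv⟩ := (Matrix.exists_mulVec_eq_zero_iff).mpr hdG
    have hw : Aᵀ *ᵥ v = 0 := by
      have h0 : dotProduct (Aᵀ *ᵥ v) (Aᵀ *ᵥ v) = 0 := by
        have h1 : dotProduct v (G *ᵥ v) = dotProduct (Aᵀ *ᵥ v) (Aᵀ *ᵥ v) := by
          rw [hGdef, ← Matrix.mulVec_mulVec, Matrix.dotProduct_mulVec v A (Aᵀ *ᵥ v),
            Matrix.mulVec_transpose]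
        rw [hGv, dotProduct_zero] at h1
        exact h1.symm
      exact dotProduct_self_eq_zero.mp h0
    have hNv : (A * J * Aᵀ) *ᵥ v = 0 := by
      rw [← Matrix.mulVec_mulVec, hw, Matrix.mulVec_zero]
    have hz : (A * J * Aᵀ).det = 0 := (Matrix.exists_mulVec_eq_zero_iff).mp ⟨v, hv0, hNv⟩
    rw [hz]
    exact hGnn

/-- The entries of the diagonal scaling matrix: square roots of the diagonal of `Xhat`. -/
noncomputable def sfun (K : ℕ) (ρ σ : ℕ → ℝ) (i : Fin (2 * K)) : ℝ :=
  if (i : ℕ) < K then Real.sqrt (ρ i) else Real.sqrt (σ (((i : ℕ) - K) / 2))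

lemma Xhat_eq (K : ℕ) (ρ σ : ℕ → ℝ)
    (hρ : ∀ i < K, 0 ≤ ρ i) (hσ : ∀ j < K / 2, 0 ≤ σ j) (hKeven : Even K) :
    Xhat K ρ σ = Matrix.diagonal (sfun K ρ σ) * Matrix.diagonal (sfun K ρ σ) := by
  obtain ⟨t, ht⟩ := hKeven
  rw [Matrix.diagonal_mul_diagonal]
  unfold Xhat sfun
  refine congrArg Matrix.diagonal (funext fun i => ?_)
  have hi2 := i.isLt
  by_cases hi : (i : ℕ) < K
  · simp [hi, Real.mul_self_sqrt (hρ i hi)]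
  · have hlt : ((i : ℕ) - K) / 2 < K / 2 := by omega
    simp [hi, Real.mul_self_sqrt (hσ _ hlt)]

lemma Xmat_eq (K : ℕ) (ρ σ : ℕ → ℝ)
    (hρ : ∀ i < K, 0 ≤ ρ i) (hσ : ∀ j < K / 2, 0 ≤ σ j) (hKeven : Even K) :
    Xmat K ρ σ = Matrix.diagonal (sfun K ρ σ) * Xmat K (fun _ => 1) (fun _ => 1)
      * Matrix.diagonal (sfun K ρ σ) := by
  obtain ⟨t, ht⟩ := hKeven
  ext i j
  have hi2 := i.isLt
  have hj2 := j.isLt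
  simp only [Matrix.mul_diagonal, Matrix.diagonal_mul]
  unfold Xmat sfun
  simp only [Matrix.of_apply]
  by_cases hi : (i : ℕ) < K
  · by_cases hij : (i : ℕ) = (j : ℕ)
    · have hj : (j : ℕ) < K := by omega
      simp only [hi, hj, hij, if_true, if_pos]
      rw [mul_one, Real.mul_self_sqrt (hρ _ hj)]
    · simp [hi, hij]
  · by_cases hj : (j : ℕ) < K
    · simp [hi, hj]
    · by_cases hq : ((i : ℕ) - K) / 2 = ((j : ℕ) - K) / 2
      · have hσq : (0:ℝ) ≤ σ (((j : ℕ) - K) / 2) := hσ _ (by omega)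
        by_cases hp1 : ((i : ℕ) - K) % 2 = 0 ∧ ((j : ℕ) - K) % 2 = 1
        · simp only [hi, hj, hq, hp1, if_true, if_pos, if_neg, if_false]
          norm_num
          linarith [Real.mul_self_sqrt hσq]
        · by_cases hp2 : ((i : ℕ) - K) % 2 = 1 ∧ ((j : ℕ) - K) % 2 = 0
          · simp only [hi, hj, hq, hp1, hp2, if_true, if_pos, if_neg, if_false]
            norm_num
            linarith [Real.mul_self_sqrt hσq]
          · simp [hi, hj, hq, hp1, hp2]
      · simp [hi, hj, hq]

lemma Xmat_one_orth (K : ℕ) (hKeven : Even K) :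
    Xmat K (fun _ => 1) (fun _ => 1) * (Xmat K (fun _ => 1) (fun _ => 1))ᵀ = 1 := by
  obtain ⟨t, ht⟩ := hKeven
  set pn : ℕ → ℕ := fun x => if x < K then x else if (x - K) % 2 = 0 then x + 1 else x - 1
    with hpn
  set en : ℕ → ℝ := fun x => if x < K ∨ (x - K) % 2 = 0 then (1:ℝ) else -1 with hen
  have hpn_lt : ∀ x, x < 2 * K → pn x < 2 * K := by
    intro x hx
    rw [hpn]
    dsimp only
    split_ifs <;> omega
  have hJ : ∀ i j : Fin (2 * K), Xmat K (fun _ => 1) (fun _ => 1) i j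
      = if (j : ℕ) = pn (i : ℕ) then en (i : ℕ) else 0 := by
    intro i j
    have hi2 := i.isLt
    have hj2 := j.isLt
    unfold Xmat
    rw [hpn, hen]
    simp only [Matrix.of_apply]
    split_ifs <;> first | rfl | omega | (exfalso; omega)
  ext i k
  have hi2 := i.isLt
  have hk2 := k.isLt
  rw [Matrix.mul_apply, Matrix.one_apply]
  simp only [Matrix.transpose_apply, hJ]
  set a : Fin (2 * K) := ⟨pn (i : ℕ), hpn_lt _ hi2⟩ with hadef
  set b : Fin (2 * K) := ⟨pn (k : ℕ), hpn_lt _ hk2⟩ with hbdef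
  have ha : ∀ j : Fin (2 * K), ((j : ℕ) = pn (i : ℕ)) ↔ j = a := by
    intro j; rw [Fin.ext_iff]
  have hb : ∀ j : Fin (2 * K), ((j : ℕ) = pn (k : ℕ)) ↔ j = b := by
    intro j; rw [Fin.ext_iff]
  simp only [ha, hb, ite_mul, zero_mul, mul_ite, mul_zero]
  rw [Finset.sum_ite_eq' Finset.univ b]
  simp only [Finset.mem_univ, if_true]
  by_cases hik : i = k
  · subst hik
    simp only [if_pos rfl]
    rw [hen]
    dsimp only
    split_ifs <;> norm_num
  · have hvne : (i : ℕ) ≠ (k : ℕ) := fun h => hik (Fin.ext h)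
    have hane : b ≠ a := by
      rw [hadef, hbdef, Ne, Fin.ext_iff]
      dsimp only
      rw [hpn]
      dsimp only
      split_ifs <;> omega
    simp [hane, hik]

/-- For every subset `Y ⊆ {1,…,M}`, `det(L_Y) ≤ det(L̂_Y)` where `L = Z X Zᵀ` is the
nonsymmetric kernel and `L̂ = Z X̂ Zᵀ` is the symmetric proposal kernel. -/
theorem det_principal_le_det_proposal
    (M K : ℕ) (hM : 0 < M) (hK : 0 < K) (hKeven : Even K)
    (ρ σ : ℕ → ℝ) (hρ : ∀ i < K, 0 < ρ i) (hσ : ∀ j < K / 2, 0 < σ j)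
    (Z : Matrix (Fin M) (Fin (2 * K)) ℝ) (Y : Finset (Fin M)) :
    pdet (Z * Xmat K ρ σ * Zᵀ) Y ≤ pdet (Z * Xhat K ρ σ * Zᵀ) Y := by
  classical
  set B : Matrix {x // x ∈ Y} (Fin (2 * K)) ℝ := Z.submatrix (fun a => a.1) id with hB
  have hsub : ∀ (X : Matrix (Fin (2 * K)) (Fin (2 * K)) ℝ),
      pdet (Z * X * Zᵀ) Y = (B * X * Bᵀ).det := by
    intro X
    unfold pdet
    have hMM : (Z * X * Zᵀ).submatrix (fun a : {x // x ∈ Y} => a.1) (fun a : {x // x ∈ Y} => a.1)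
        = B * X * Bᵀ := by
      ext a b
      simp [Matrix.mul_apply, hB]
    rw [hMM]
  have hρ' : ∀ i < K, 0 ≤ ρ i := fun i hi => (hρ i hi).le
  have hσ' : ∀ j < K / 2, 0 ≤ σ j := fun j hj => (hσ j hj).le
  set D := Matrix.diagonal (sfun K ρ σ) with hD
  have hDT : Dᵀ = D := Matrix.diagonal_transpose _
  set J := Xmat K (fun _ => 1) (fun _ => 1) with hJdef
  have hJo : J * Jᵀ = 1 := Xmat_one_orth K hKeven
  rw [hsub (Xmat K ρ σ), hsub (Xhat K ρ σ), Xmat_eq K ρ σ hρ' hσ' hKeven,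
    Xhat_eq K ρ σ hρ' hσ' hKeven]
  have e1 : B * (D * J * D) * Bᵀ = (B * D) * J * (B * D)ᵀ := by
    rw [Matrix.transpose_mul, hDT]
    simp only [Matrix.mul_assoc]
  have e2 : B * (D * D) * Bᵀ = (B * D) * (B * D)ᵀ := by
    rw [Matrix.transpose_mul, hDT]
    simp only [Matrix.mul_assoc]
  rw [e1, e2]
  exact det_mul_orth_le (B * D) J hJo
end

section
/- Let L ∈ ℝ^{M×M} be such that L + I_M is invertible, and define the marginal kernel K = I_M − (L + I_M)^{-1}. Then for every subset A ⊆ {1,…,M}, Σ_{Y : A ⊆ Y ⊆ {1,…,M}} det(L_Y) = det(K_A) · det(L + I_M). (This holds without any symmetry assumption on L; it expresses that the marginal probability Pr(A ⊆ Y) of a determinantal point process with kernel L equals det(K_A).) -/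
open Matrix

lemma pdet_congr {n : ℕ} {X Y : Matrix (Fin n) (Fin n) ℝ} {S : Finset (Fin n)}
    (h : ∀ i ∈ S, ∀ j ∈ S, X i j = Y i j) : pdet X S = pdet Y S := by
  unfold pdet
  congr 1
  ext a b
  exact h a.1 a.2 b.1 b.2

lemma pdet_transpose {n : ℕ} (X : Matrix (Fin n) (Fin n) ℝ) (S : Finset (Fin n)) :
    pdet Xᵀ S = pdet X S := by
  unfold pdet
  rw [← Matrix.det_transpose (X.submatrix _ _)]
  rfl

/-- If all rows of `N` outside `S` are standard basis rows, the determinant of `N`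
equals the principal minor on `S`. -/
lemma det_eq_pdet_of_rows {n : ℕ} (N : Matrix (Fin n) (Fin n) ℝ) (S : Finset (Fin n))
    (hN : ∀ i ∉ S, ∀ j, N i j = if i = j then 1 else 0) :
    N.det = pdet N S := by
  classical
  let e : {x // x ∈ S} ⊕ {x // x ∉ S} ≃ Fin n := Equiv.sumCompl (· ∈ S)
  rw [← Matrix.det_submatrix_equiv_self e N]
  have heq : N.submatrix e e =
      Matrix.fromBlocks
        (N.submatrix (fun a : {x // x ∈ S} => a.1) (fun a : {x // x ∈ S} => a.1))
        (N.submatrix (fun a : {x // x ∈ S} => a.1) (fun a : {x // x ∉ S} => a.1))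
        0 1 := by
    ext i j
    cases i with
    | inl a =>
      cases j with
      | inl b => simp [e, Matrix.fromBlocks]
      | inr b => simp [e, Matrix.fromBlocks]
    | inr a =>
      cases j with
      | inl b =>
        have hab : a.1 ≠ b.1 := fun hh => a.2 (hh ▸ b.2)
        simp [e, Matrix.fromBlocks, hN a.1 a.2 b.1, hab]
      | inr b =>
        have : N a.1 b.1 = if a = b then 1 else 0 := by
          rw [hN a.1 a.2 b.1]
          simp [Subtype.ext_iff]
        simp [e, Matrix.fromBlocks, this, Matrix.one_apply]
  rw [heq, Matrix.det_fromBlocks_zero₂₁]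
  simp [pdet]

lemma det_add_expand {n : ℕ} (B C : Matrix (Fin n) (Fin n) ℝ) :
    (B + C).det = ∑ S : Finset (Fin n), (Matrix.of (S.piecewise B C)).det := by
  classical
  have := (Matrix.detRowAlternating (R := ℝ) (n := Fin n)).toMultilinearMap.map_add_univ
    (B : Fin n → Fin n → ℝ) (C : Fin n → Fin n → ℝ)
  exact this

/-- For `L` with `L + I` invertible and marginal kernel `K = I − (L + I)⁻¹`, one has
`Σ_{Y ⊇ A} det(L_Y) = det(K_A) · det(L + I)` for every subset `A`, i.e. the marginal
probability `Pr(A ⊆ Y)` of the DPP with kernel `L` equals `det(K_A)`. No symmetry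
assumption is made on `L`. -/
theorem marginal_kernel_principal_det
    (M : ℕ) (hM : 0 < M) (L : Matrix (Fin M) (Fin M) ℝ)
    (h : IsUnit (L + 1)) (A : Finset (Fin M)) :
    ∑ Y ∈ Finset.univ.filter (fun Y : Finset (Fin M) => A ⊆ Y), pdet L Y
      = pdet (1 - (L + 1)⁻¹) A * (L + 1).det := by
  classical
  set D : Matrix (Fin M) (Fin M) ℝ :=
    Matrix.diagonal (fun i => if i ∈ A then (0:ℝ) else 1) with hD
  -- Step 1: LHS = det (L + D)
  have step1 : (L + D).det
      = ∑ Y ∈ Finset.univ.filter (fun Y : Finset (Fin M) => A ⊆ Y), pdet L Y := by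
    rw [det_add_expand]
    rw [Finset.sum_filter]
    apply Finset.sum_congr rfl
    intro S _
    by_cases hAS : A ⊆ S
    · rw [if_pos hAS]
      have hdet : (Matrix.of (S.piecewise L D)).det = pdet (Matrix.of (S.piecewise L D)) S := by
        apply det_eq_pdet_of_rows
        intro i hi j
        have hiA : i ∉ A := fun hiA => hi (hAS hiA)
        simp [Finset.piecewise, hi, hD, Matrix.diagonal, hiA, eq_comm]
      rw [hdet]
      apply pdet_congr
      intro i hi j _
      simp [Finset.piecewise, hi]
    · rw [if_neg hAS]
      obtain ⟨i, hiA, hiS⟩ := Finset.not_subset.mp hAS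
      apply Matrix.det_eq_zero_of_row_eq_zero i
      intro j
      simp [Finset.piecewise, hiS, hD, Matrix.diagonal, hiA]
  -- Step 2: det (L + D) = pdet K A * det (L+1)
  set P : Matrix (Fin M) (Fin M) ℝ :=
    Matrix.diagonal (fun i => if i ∈ A then (1:ℝ) else 0) with hP
  have hinv : (L + 1) * (L + 1)⁻¹ = 1 :=
    Matrix.mul_nonsing_inv _ ((Matrix.isUnit_iff_isUnit_det _).mp h)
  have hfac : L + D = (L + 1) * (1 - (L + 1)⁻¹ * P) := by
    rw [Matrix.mul_sub, mul_one, ← Matrix.mul_assoc, hinv, Matrix.one_mul]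
    have : D = 1 - P := by
      ext i j
      by_cases hij : i = j <;>
        simp [hD, hP, Matrix.diagonal, Matrix.one_apply, hij] <;> split <;> ring
    rw [this]
    abel
  have hQ : (1 - (L + 1)⁻¹ * P).det = pdet (1 - (L + 1)⁻¹) A := by
    rw [← Matrix.det_transpose]
    rw [det_eq_pdet_of_rows _ A ?_]
    · rw [← pdet_transpose (1 - (L + 1)⁻¹) A]
      apply pdet_congr
      intro i hi j hj
      simp [Matrix.transpose_apply, Matrix.mul_apply, hP, Matrix.diagonal, hi,
        Matrix.one_apply, Finset.sum_ite_eq, Matrix.sub_apply]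
    · intro i hi j
      simp [Matrix.transpose_apply, Matrix.mul_apply, hP, Matrix.diagonal, hi,
        Matrix.one_apply, Matrix.sub_apply, eq_comm]
  rw [← step1, hfac, Matrix.det_mul, hQ]
  ring
end

section
/- Suppose the columns of Z are orthonormal, i.e., Zᵀ Z = I_{2K}. Then the ratio of normalizers of the proposal and target kernels satisfies det(L̂ + I_M) / det(L + I_M) = Π_{j=1}^{K/2} (1 + 2σ_j/(σ_j² + 1)). -/
open Matrix

/-- Reindexing equivalence splitting `Fin (2*K)` into the first `K` indices and
`(parity, pair-index)` for the rest. -/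
def pairEquiv (K : ℕ) (h2 : 2 * (K/2) = K) : Fin (2*K) ≃ (Fin K ⊕ Fin 2 × Fin (K/2)) where
  toFun i := if h : (i:ℕ) < K then Sum.inl ⟨i, h⟩
    else Sum.inr (⟨((i:ℕ)-K) % 2, by omega⟩, ⟨((i:ℕ)-K)/2, by have := i.isLt; omega⟩)
  invFun x := match x with
    | Sum.inl j => ⟨j, by have := j.isLt; omega⟩
    | Sum.inr (r, j) => ⟨K + 2*(j:ℕ) + r, by have := j.isLt; have := r.isLt; omega⟩
  left_inv i := by
    by_cases h : (i:ℕ) < K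
    · simp [h]
    · simp only [h, dif_neg, not_false_iff]
      ext; simp; omega
  right_inv x := by
    rcases x with j | ⟨r, j⟩
    · simp [j.isLt]
    · have hj := j.isLt; have hr := r.isLt
      simp only []
      rw [dif_neg (by omega)]
      congr 1
      ext <;> simp <;> omega

lemma xmat_eq (K : ℕ) (h2 : 2 * (K/2) = K) (ρ σ : ℕ → ℝ) :
    Xmat K ρ σ + 1 =
      (Matrix.fromBlocks (Matrix.diagonal fun i : Fin K => ρ i + 1) 0 0
        (Matrix.blockDiagonal fun j : Fin (K/2) => !![1, σ j; -σ j, 1])).submatrix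
        (pairEquiv K h2) (pairEquiv K h2) := by
  ext i j
  have hi2 := i.isLt; have hj2 := j.isLt
  simp only [Matrix.add_apply, Matrix.one_apply, Xmat, Matrix.of_apply, Matrix.submatrix_apply,
    pairEquiv, Equiv.coe_fn_mk]
  by_cases hi : (i:ℕ) < K <;> by_cases hj : (j:ℕ) < K <;>
    simp only [hi, hj, dif_pos, dif_neg, not_false_iff, if_true, if_false,
      Matrix.fromBlocks_apply₁₁, Matrix.fromBlocks_apply₁₂, Matrix.fromBlocks_apply₂₁,
      Matrix.fromBlocks_apply₂₂, Matrix.zero_apply]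
  · rw [Matrix.diagonal_apply]
    by_cases h : (i:ℕ) = (j:ℕ)
    · rw [if_pos h, if_pos (show i = j from Fin.ext h),
        if_pos (show (⟨(i:ℕ),hi⟩ : Fin K) = ⟨(j:ℕ),hj⟩ by simp [Fin.mk.injEq, h])]
    · rw [if_neg h, if_neg (show ¬ i = j by simp only [Fin.ext_iff]; exact h),
        if_neg (by simp [Fin.mk.injEq, h])]
      ring
  · rw [if_neg (by omega), if_neg (show ¬ i = j by simp only [Fin.ext_iff]; omega)]
    ring
  · rw [if_neg (show ¬ i = j by simp only [Fin.ext_iff]; omega)]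
    ring
  · rw [Matrix.blockDiagonal_apply]
    by_cases hd : ((i:ℕ)-K)/2 = ((j:ℕ)-K)/2
    · rcases Nat.mod_two_eq_zero_or_one ((i:ℕ)-K) with hbi | hbi <;>
      rcases Nat.mod_two_eq_zero_or_one ((j:ℕ)-K) with hbj | hbj
      · rw [if_pos hd, if_neg (by omega), if_neg (by omega),
          if_pos (show i = j by simp only [Fin.ext_iff]; omega),
          if_pos (show (⟨((i:ℕ)-K)/2, by omega⟩ : Fin (K/2)) = ⟨((j:ℕ)-K)/2, by omega⟩ by
            simp [Fin.mk.injEq, hd])]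
        simp [hbi, hbj]
      · rw [if_pos hd, if_pos ⟨hbi, hbj⟩,
          if_neg (show ¬ i = j by simp only [Fin.ext_iff]; omega),
          if_pos (show (⟨((i:ℕ)-K)/2, by omega⟩ : Fin (K/2)) = ⟨((j:ℕ)-K)/2, by omega⟩ by
            simp [Fin.mk.injEq, hd])]
        simp [hbi, hbj, hd]
      · rw [if_pos hd, if_neg (by omega), if_pos ⟨hbi, hbj⟩,
          if_neg (show ¬ i = j by simp only [Fin.ext_iff]; omega),
          if_pos (show (⟨((i:ℕ)-K)/2, by omega⟩ : Fin (K/2)) = ⟨((j:ℕ)-K)/2, by omega⟩ by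
            simp [Fin.mk.injEq, hd])]
        simp [hbi, hbj, hd]
      · rw [if_pos hd, if_neg (by omega), if_neg (by omega),
          if_pos (show i = j by simp only [Fin.ext_iff]; omega),
          if_pos (show (⟨((i:ℕ)-K)/2, by omega⟩ : Fin (K/2)) = ⟨((j:ℕ)-K)/2, by omega⟩ by
            simp [Fin.mk.injEq, hd])]
        simp [hbi, hbj]
    · rw [if_neg hd, if_neg (show ¬ i = j by simp only [Fin.ext_iff]; omega),
        if_neg (by simp only [Fin.mk.injEq]; exact hd)]
      ring

lemma prod_halves (m : ℕ) (f : ℕ → ℝ) :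
    ∏ i ∈ Finset.range (2*m), f (i/2) = ∏ j ∈ Finset.range m, (f j)^2 := by
  induction m with
  | zero => simp
  | succ n ih =>
    rw [show 2*(n+1) = 2*n+1+1 by ring, Finset.prod_range_succ, Finset.prod_range_succ,
      Finset.prod_range_succ, ih, show (2*n+1)/2 = n by omega, show (2*n)/2 = n by omega]
    ring

lemma det_xmat_add_one (K : ℕ) (h2 : 2 * (K/2) = K) (ρ σ : ℕ → ℝ) :
    (Xmat K ρ σ + 1).det =
      (∏ i ∈ Finset.range K, (ρ i + 1)) * ∏ j ∈ Finset.range (K/2), ((σ j)^2 + 1) := by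
  rw [xmat_eq K h2 ρ σ, Matrix.det_submatrix_equiv_self, Matrix.det_fromBlocks_zero₂₁,
    Matrix.det_diagonal, Matrix.det_blockDiagonal]
  congr 1
  · exact Fin.prod_univ_eq_prod_range (fun i => ρ i + 1) K
  · rw [← Fin.prod_univ_eq_prod_range (fun j => (σ j)^2 + 1) (K/2)]
    congr 1; ext j; simp [Matrix.det_fin_two]; ring

lemma det_xhat_add_one (K : ℕ) (h2 : 2 * (K/2) = K) (ρ σ : ℕ → ℝ) :
    (Xhat K ρ σ + 1).det =
      (∏ i ∈ Finset.range K, (ρ i + 1)) * ∏ j ∈ Finset.range (K/2), (σ j + 1)^2 := by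
  have : Xhat K ρ σ + 1 =
      Matrix.diagonal fun i : Fin (2*K) =>
        (if (i : ℕ) < K then ρ i else σ (((i : ℕ) - K) / 2)) + 1 := by
    rw [Xhat, ← Matrix.diagonal_one, Matrix.diagonal_add]
  rw [this, Matrix.det_diagonal,
    Fin.prod_univ_eq_prod_range (fun i : ℕ => (if i < K then ρ i else σ ((i - K) / 2)) + 1) (2*K),
    two_mul, Finset.prod_range_add]
  congr 1
  · exact Finset.prod_congr rfl fun i hi => by
      rw [if_pos (Finset.mem_range.mp hi)]
  · rw [show (∏ i ∈ Finset.range K, ((if K + i < K then ρ (K+i) else σ ((K + i - K) / 2)) + 1))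
        = ∏ i ∈ Finset.range K, (σ (i / 2) + 1) from
      Finset.prod_congr rfl fun i _ => by
        rw [if_neg (by omega), show K + i - K = i by omega]]
    rw [← prod_halves (K/2) (fun j => σ j + 1), h2]

/-- If the columns of `Z` are orthonormal, the ratio of normalizers of the proposal
kernel `L̂ = Z X̂ Zᵀ` and the target kernel `L = Z X Zᵀ` is
`Π_j (1 + 2σ_j/(σ_j² + 1))`. -/
theorem normalizer_ratio_orthonormal
    (M K : ℕ) (hM : 0 < M) (hK : 0 < K) (hKeven : Even K) (hKM : 2 * K ≤ M)
    (ρ σ : ℕ → ℝ) (hρ : ∀ i < K, 0 < ρ i) (hσ : ∀ j < K / 2, 0 < σ j)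
    (Z : Matrix (Fin M) (Fin (2 * K)) ℝ) (hZ : Zᵀ * Z = 1) :
    (Z * Xhat K ρ σ * Zᵀ + 1).det / (Z * Xmat K ρ σ * Zᵀ + 1).det
      = ∏ j ∈ Finset.range (K / 2), (1 + 2 * σ j / (σ j ^ 2 + 1)) := by
  have h2 : 2 * (K/2) = K := Nat.mul_div_cancel' hKeven.two_dvd
  have conj : ∀ A : Matrix (Fin (2*K)) (Fin (2*K)) ℝ,
      (Z * A * Zᵀ + 1).det = (A + 1).det := by
    intro A
    rw [add_comm, Matrix.mul_assoc, Matrix.det_one_add_mul_comm, Matrix.mul_assoc, hZ,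
      Matrix.mul_one, add_comm]
  rw [conj, conj, det_xmat_add_one K h2 ρ σ, det_xhat_add_one K h2 ρ σ]
  have hN : (∏ i ∈ Finset.range K, (ρ i + 1)) ≠ 0 := by
    refine ne_of_gt (Finset.prod_pos fun i hi => ?_)
    have := hρ i (Finset.mem_range.mp hi); linarith
  rw [mul_div_mul_left _ _ hN, ← Finset.prod_div_distrib]
  refine Finset.prod_congr rfl fun j _ => ?_
  have hs : (σ j)^2 + 1 ≠ 0 := by positivity
  field_simp
  ring
end

section
/- For every 0 ≤ k ≤ 2K, the number of pairs (I, J) of subsets of {1,…,2K} with |I| = |J| = k such that det(X_{I,J}) ≠ 0 equals the binomial coefficient C(2K, k); in particular it equals the number of subsets I ⊆ {1,…,2K} with |I| = k for which det(X̂_I) ≠ 0. -/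
open Matrix

/-- `subDet X I J` is the determinant of the submatrix of `X` with rows indexed by `I`
and columns indexed by `J`, both taken in increasing order (defined to be `0` when
`|I| ≠ |J|`; the determinant of an empty matrix is `1`). -/
noncomputable def subDet {n : ℕ} (X : Matrix (Fin n) (Fin n) ℝ) (I J : Finset (Fin n)) : ℝ :=
  if h : J.card = I.card then
    Matrix.det (Matrix.of fun (a b : Fin I.card) =>
      X (I.orderIsoOfFin rfl a).1 (J.orderIsoOfFin h b).1)
  else 0


namespace CardNZAux

def piFun (K n : ℕ) : ℕ :=
  if n < K then n else if (n - K) % 2 = 0 then n + 1 else n - 1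

lemma piFun_invol (K n : ℕ) : piFun K (piFun K n) = n := by
  unfold piFun; split_ifs <;> omega

lemma piFun_lt {K n : ℕ} (hK : K % 2 = 0) (hn : n < 2 * K) : piFun K n < 2 * K := by
  unfold piFun; split_ifs <;> omega

def piPerm (K : ℕ) (hK : K % 2 = 0) : Equiv.Perm (Fin (2 * K)) :=
  Function.Involutive.toPerm (fun i => ⟨piFun K i, piFun_lt hK i.2⟩)
    (fun i => Fin.ext (piFun_invol K i))

lemma piPerm_val (K : ℕ) (hK : K % 2 = 0) (i : Fin (2 * K)) :
    ((piPerm K hK i : Fin (2 * K)) : ℕ) = piFun K (i : ℕ) := rfl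

noncomputable def dFun (K : ℕ) (ρ σ : ℕ → ℝ) (n : ℕ) : ℝ :=
  if n < K then ρ n else if (n - K) % 2 = 0 then σ ((n - K) / 2) else -σ ((n - K) / 2)

lemma dFun_ne {K : ℕ} (hK : K % 2 = 0) {ρ σ : ℕ → ℝ}
    (hρ : ∀ i < K, 0 < ρ i) (hσ : ∀ j < K / 2, 0 < σ j) {n : ℕ} (hn : n < 2 * K) :
    dFun K ρ σ n ≠ 0 := by
  unfold dFun
  split_ifs with h1 h2
  · exact (hρ n h1).ne'
  · exact (hσ _ (by omega)).ne'
  · exact neg_ne_zero.mpr (hσ _ (by omega)).ne'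

lemma Xmat_eq (K : ℕ) (ρ σ : ℕ → ℝ) (i j : Fin (2 * K)) :
    Xmat K ρ σ i j = if (j : ℕ) = piFun K (i : ℕ) then dFun K ρ σ (i : ℕ) else 0 := by
  simp only [Xmat, Matrix.of_apply, piFun, dFun]
  split_ifs <;> first | rfl | (exfalso; omega)

lemma subDet_map_ne {K : ℕ} (hK : K % 2 = 0) {ρ σ : ℕ → ℝ}
    (hρ : ∀ i < K, 0 < ρ i) (hσ : ∀ j < K / 2, 0 < σ j)
    (I : Finset (Fin (2 * K))) :
    subDet (Xmat K ρ σ) I (I.map (piPerm K hK).toEmbedding) ≠ 0 := by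
  set π := piPerm K hK with hπ
  set J := I.map π.toEmbedding with hJ
  have hcard : J.card = I.card := Finset.card_map _
  unfold subDet
  rw [dif_pos hcard]
  set r := I.orderIsoOfFin rfl with hr
  set c := J.orderIsoOfFin hcard with hc
  have hmem : ∀ a : Fin I.card, π (r a).1 ∈ J := by
    intro a
    rw [hJ]
    exact Finset.mem_map_of_mem _ (r a).2
  set f : Fin I.card → Fin I.card := fun a => c.symm ⟨π (r a).1, hmem a⟩ with hf
  have hcf : ∀ a, (c (f a)).1 = π (r a).1 := by
    intro a
    rw [hf]
    simp
  have hinj : Function.Injective f := by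
    intro a b hab
    have h1 : π (r a).1 = π (r b).1 := by
      rw [← hcf a, ← hcf b, hab]
    have h2 : (r a).1 = (r b).1 := π.injective h1
    have h3 : r a = r b := Subtype.ext h2
    exact r.injective h3
  have hbij : Function.Bijective f := Finite.injective_iff_bijective.mp hinj
  set e := Equiv.ofBijective f hbij with he
  have hiff : ∀ a b : Fin I.card, (((c b).1 : ℕ) = piFun K ((r a).1 : ℕ)) ↔ e a = b := by
    intro a b
    constructor
    · intro h
      have h1 : (c b).1 = π (r a).1 := Fin.ext (by rw [h, piPerm_val])
      have h2 : c b = ⟨π (r a).1, hmem a⟩ := Subtype.ext h1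
      have : b = f a := by
        rw [hf]
        simp [← h2]
      exact this.symm
    · intro h
      have : (c b).1 = π (r a).1 := by rw [← h]; exact hcf a
      rw [this, piPerm_val]
  have hM : (Matrix.of fun (a b : Fin I.card) => Xmat K ρ σ (r a).1 (c b).1)
      = Matrix.diagonal (fun a => dFun K ρ σ (((r a).1 : Fin (2*K)) : ℕ)) * (e.toPEquiv.toMatrix : Matrix _ _ ℝ) := by
    ext a b
    rw [Matrix.of_apply, Xmat_eq, Matrix.diagonal_mul]
    rw [PEquiv.toMatrix_apply, Equiv.toPEquiv_apply]
    by_cases h : e a = b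
    · rw [if_pos ((hiff a b).mpr h)]
      simp [h]
    · rw [if_neg (fun hh => h ((hiff a b).mp hh))]
      simp [h]
  have hdet : (e.toPEquiv.toMatrix : Matrix (Fin I.card) (Fin I.card) ℝ).det
      = ((Equiv.Perm.sign e : ℤ) : ℝ) := Matrix.det_permutation e
  rw [hM, Matrix.det_mul, Matrix.det_diagonal, hdet]
  apply mul_ne_zero
  · exact Finset.prod_ne_zero_iff.mpr fun a _ => dFun_ne hK hρ hσ (r a).1.isLt
  · rcases Int.units_eq_one_or (Equiv.Perm.sign e) with h | h <;> simp [h]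

lemma subDet_zero {K : ℕ} (hK : K % 2 = 0) (ρ σ : ℕ → ℝ)
    {I J : Finset (Fin (2 * K))} (hcard : J.card = I.card)
    (hne : J ≠ I.map (piPerm K hK).toEmbedding) :
    subDet (Xmat K ρ σ) I J = 0 := by
  set π := piPerm K hK with hπ
  unfold subDet
  rw [dif_pos hcard]
  obtain ⟨i, hiI, hiJ⟩ : ∃ i ∈ I, π i ∉ J := by
    by_contra h
    push_neg at h
    have hsub : I.map π.toEmbedding ⊆ J := by
      intro x hx
      obtain ⟨y, hy, rfl⟩ := Finset.mem_map.mp hx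
      exact h y hy
    have := Finset.eq_of_subset_of_card_le hsub (by rw [Finset.card_map]; exact hcard.le)
    exact hne this.symm
  set r := I.orderIsoOfFin rfl with hr
  set c := J.orderIsoOfFin hcard with hc
  apply Matrix.det_eq_zero_of_row_eq_zero (r.symm ⟨i, hiI⟩)
  intro b
  rw [Matrix.of_apply, Xmat_eq]
  apply if_neg
  intro h
  have h1 : (r (r.symm ⟨i, hiI⟩)).1 = i := by simp
  rw [h1] at h
  have : (c b).1 = π i := Fin.ext (by rw [h, piPerm_val])
  exact hiJ (this ▸ (c b).2)


lemma subDet_Xhat_ne {K : ℕ} (hK : K % 2 = 0) {ρ σ : ℕ → ℝ}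
    (hρ : ∀ i < K, 0 < ρ i) (hσ : ∀ j < K / 2, 0 < σ j)
    (I : Finset (Fin (2 * K))) : subDet (Xhat K ρ σ) I I ≠ 0 := by
  unfold subDet
  rw [dif_pos rfl]
  set r := I.orderIsoOfFin rfl with hr
  have hM : (Matrix.of fun (a b : Fin I.card) => Xhat K ρ σ (r a).1 (r b).1)
      = Matrix.diagonal (fun a =>
          if (((r a).1 : ℕ) < K) then ρ ((r a).1 : ℕ) else σ ((((r a).1 : ℕ) - K) / 2)) := by
    ext a b
    rw [Matrix.of_apply, Xhat, Matrix.diagonal_apply, Matrix.diagonal_apply]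
    by_cases h : a = b
    · subst h; rw [if_pos rfl, if_pos rfl]
    · have : (r a).1 ≠ (r b).1 := fun hh => h (r.injective (Subtype.ext hh))
      rw [if_neg this, if_neg h]
  rw [hM, Matrix.det_diagonal]
  apply Finset.prod_ne_zero_iff.mpr
  intro a _
  by_cases h : ((r a).1 : ℕ) < K
  · rw [if_pos h]; exact (hρ _ h).ne'
  · rw [if_neg h]
    exact (hσ _ (by have := (r a).1.isLt; omega)).ne'

lemma card_subtype (n k : ℕ) :
    Nat.card {I : Finset (Fin n) // I.card = k} = n.choose k := by
  rw [Nat.card_eq_fintype_card, Fintype.card_finset_len, Fintype.card_fin]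

end CardNZAux

open CardNZAux in
/-- For every `0 ≤ k ≤ 2K`, the number of pairs `(I, J)` of `k`-subsets of `{1,…,2K}`
with `det(X_{I,J}) ≠ 0` equals `C(2K, k)`, which is also the number of `k`-subsets `I`
with `det(X̂_I) ≠ 0`. -/
theorem card_nonzero_subdeterminants
    (K k : ℕ) (hK : 0 < K) (hKeven : Even K) (hk : k ≤ 2 * K)
    (ρ σ : ℕ → ℝ) (hρ : ∀ i < K, 0 < ρ i) (hσ : ∀ j < K / 2, 0 < σ j) :
    Nat.card {p : Finset (Fin (2 * K)) × Finset (Fin (2 * K)) //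
        p.1.card = k ∧ p.2.card = k ∧ subDet (Xmat K ρ σ) p.1 p.2 ≠ 0}
      = Nat.choose (2 * K) k ∧
    Nat.card {I : Finset (Fin (2 * K)) // I.card = k ∧ subDet (Xhat K ρ σ) I I ≠ 0}
      = Nat.choose (2 * K) k := by
  have hK2 : K % 2 = 0 := Nat.even_iff.mp hKeven
  set π := piPerm K hK2 with hπ
  constructor
  · have E : {p : Finset (Fin (2 * K)) × Finset (Fin (2 * K)) //
        p.1.card = k ∧ p.2.card = k ∧ subDet (Xmat K ρ σ) p.1 p.2 ≠ 0}
        ≃ {I : Finset (Fin (2 * K)) // I.card = k} :=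
    { toFun := fun p => ⟨p.1.1, p.2.1⟩
      invFun := fun I => ⟨(I.1, I.1.map π.toEmbedding),
        ⟨I.2, by rw [Finset.card_map]; exact I.2, subDet_map_ne hK2 hρ hσ I.1⟩⟩
      left_inv := fun p => by
        obtain ⟨⟨I, J⟩, hI, hJ, hne⟩ := p
        have hJeq : J = I.map π.toEmbedding := by
          by_contra h
          exact hne (subDet_zero hK2 ρ σ (hJ.trans hI.symm) h)
        simp only [Subtype.mk.injEq, Prod.mk.injEq]
        exact ⟨trivial, hJeq.symm⟩
      right_inv := fun I => rfl }
    rw [Nat.card_congr E, card_subtype]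
  · have E : {I : Finset (Fin (2 * K)) // I.card = k ∧ subDet (Xhat K ρ σ) I I ≠ 0}
        ≃ {I : Finset (Fin (2 * K)) // I.card = k} :=
      Equiv.subtypeEquivRight fun I => and_iff_left (subDet_Xhat_ne hK2 hρ hσ I)
    rw [Nat.card_congr E, card_subtype]
end

section
/- For any subsets I, J ⊆ {1,…,2K} with |I| = |J|, if det(X_{I,J}) ≠ 0 then |det(X_{I,J})| = det(X̂_I) = det(X̂_J). -/
open Matrix

def pairNat (K i : ℕ) : ℕ :=
  if i < K then i else K + 2 * ((i - K) / 2) + (1 - (i - K) % 2)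

lemma pairNat_inj {K x y : ℕ} (hx : x < 2*K) (hy : y < 2*K)
    (h : pairNat K x = pairNat K y) : x = y := by
  unfold pairNat at h; split_ifs at h <;> omega

lemma Xmat_pair {K : ℕ} {ρ σ : ℕ → ℝ} {i j : Fin (2*K)} (h : Xmat K ρ σ i j ≠ 0) :
    (j : ℕ) = pairNat K (i : ℕ) := by
  unfold Xmat pairNat at *
  simp only [Matrix.of_apply] at h
  split_ifs at h ⊢ <;> first | exact absurd rfl h | omega

lemma Xmat_abs {K : ℕ} {ρ σ : ℕ → ℝ} (hKeven : Even K)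
    (hρ : ∀ i < K, 0 < ρ i) (hσ : ∀ j < K/2, 0 < σ j)
    {i j : Fin (2*K)} (h : Xmat K ρ σ i j ≠ 0) :
    |Xmat K ρ σ i j| = (if (i:ℕ) < K then ρ i else σ (((i:ℕ) - K)/2)) := by
  have hi := i.isLt
  obtain ⟨r, hr⟩ := hKeven
  unfold Xmat at *
  simp only [Matrix.of_apply] at h ⊢
  split_ifs at h ⊢ <;>
    first
      | exact absurd rfl h
      | (exfalso; omega)
      | rw [abs_of_pos (hρ _ (by omega))]
      | rw [abs_of_pos (hσ _ (by omega))]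
      | rw [abs_neg, abs_of_pos (hσ _ (by omega))]

lemma Xmat_hat_congr {K : ℕ} {ρ σ : ℕ → ℝ} {i j : Fin (2*K)} (h : Xmat K ρ σ i j ≠ 0) :
    (if (j:ℕ) < K then ρ j else σ (((j:ℕ) - K)/2))
      = (if (i:ℕ) < K then ρ i else σ (((i:ℕ) - K)/2)) := by
  unfold Xmat at h
  simp only [Matrix.of_apply] at h
  split_ifs at h ⊢ <;>
    first
      | exact absurd rfl h
      | exact congrArg ρ (by omega)
      | exact congrArg σ (by omega)
      | (exfalso; omega)

lemma subDet_diag {K : ℕ} (ρ σ : ℕ → ℝ) (I : Finset (Fin (2*K))) :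
    subDet (Xhat K ρ σ) I I
      = ∏ a : Fin I.card, (if ((I.orderIsoOfFin rfl a : Fin (2*K)) : ℕ) < K
          then ρ ((I.orderIsoOfFin rfl a : Fin (2*K)) : ℕ)
          else σ ((((I.orderIsoOfFin rfl a : Fin (2*K)) : ℕ) - K)/2)) := by
  rw [subDet, dif_pos rfl]
  have : (Matrix.of fun (a b : Fin I.card) =>
      Xhat K ρ σ (I.orderIsoOfFin rfl a).1 (I.orderIsoOfFin rfl b).1)
      = Matrix.diagonal (fun a : Fin I.card =>
          (if ((I.orderIsoOfFin rfl a : Fin (2*K)) : ℕ) < K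
          then ρ ((I.orderIsoOfFin rfl a : Fin (2*K)) : ℕ)
          else σ ((((I.orderIsoOfFin rfl a : Fin (2*K)) : ℕ) - K)/2))) := by
    ext a b
    simp only [Matrix.of_apply, Xhat, Matrix.diagonal_apply]
    have hiff : (I.orderIsoOfFin rfl a).1 = (I.orderIsoOfFin rfl b).1 ↔ a = b := by
      constructor
      · intro h; exact (I.orderIsoOfFin rfl).injective (Subtype.ext h)
      · rintro rfl; rfl
    rw [if_congr hiff rfl rfl]
  rw [this, Matrix.det_diagonal]

/-- main -/
theorem abs_subdet_eq_subdet_hat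
    (K : ℕ) (hK : 0 < K) (hKeven : Even K)
    (ρ σ : ℕ → ℝ) (hρ : ∀ i < K, 0 < ρ i) (hσ : ∀ j < K / 2, 0 < σ j)
    (I J : Finset (Fin (2 * K))) (hIJ : I.card = J.card)
    (h : subDet (Xmat K ρ σ) I J ≠ 0) :
    |subDet (Xmat K ρ σ) I J| = subDet (Xhat K ρ σ) I I ∧
      subDet (Xhat K ρ σ) I I = subDet (Xhat K ρ σ) J J := by
  classical
  have hJI : J.card = I.card := hIJ.symm
  set eI := I.orderIsoOfFin (rfl : I.card = I.card) with heI
  set eJ := J.orderIsoOfFin hJI with heJ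
  set M : Matrix (Fin I.card) (Fin I.card) ℝ :=
    Matrix.of fun a b => Xmat K ρ σ (eI a).1 (eJ b).1 with hM
  have hdet : subDet (Xmat K ρ σ) I J = M.det := by
    rw [subDet, dif_pos hJI]
  rw [hdet] at h ⊢
  -- find the unique permutation
  rw [Matrix.det_apply] at h
  obtain ⟨τ, -, hτ⟩ := Finset.exists_ne_zero_of_sum_ne_zero h
  have hprod : (∏ a, M (τ a) a) ≠ 0 := by
    intro h0; rw [h0, smul_zero] at hτ; exact hτ rfl
  have hne : ∀ a, M (τ a) a ≠ 0 := by
    intro a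
    exact Finset.prod_ne_zero_iff.mp hprod a (Finset.mem_univ a)
  have hpair : ∀ a, ((eJ a).1 : ℕ) = pairNat K ((eI (τ a)).1 : ℕ) :=
    fun a => Xmat_pair (hne a)
  -- uniqueness of the permutation
  have huniq : ∀ τ' : Equiv.Perm (Fin I.card), τ' ≠ τ →
      (Equiv.Perm.sign τ' • ∏ a, M (τ' a) a : ℝ) = 0 := by
    intro τ' hτ'
    have : ∃ a, τ' a ≠ τ a := by
      by_contra hc
      push_neg at hc
      exact hτ' (Equiv.ext hc)
    obtain ⟨a, ha⟩ := this
    have hz : M (τ' a) a = 0 := by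
      by_contra h0
      have h1 := Xmat_pair h0
      have h2 := hpair a
      have h3 : ((eI (τ' a)).1 : ℕ) = ((eI (τ a)).1 : ℕ) :=
        pairNat_inj (eI (τ' a)).1.isLt (eI (τ a)).1.isLt (h1.symm.trans h2)
      have h4 : τ' a = τ a := eI.injective (Subtype.ext (Fin.ext h3))
      exact ha h4
    have hz2 : (∏ b, M (τ' b) b) = 0 := Finset.prod_eq_zero (Finset.mem_univ a) hz
    rw [hz2, smul_zero]
  have hdet2 : M.det = Equiv.Perm.sign τ • ∏ a, M (τ a) a := by
    rw [Matrix.det_apply]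
    exact Finset.sum_eq_single_of_mem τ (Finset.mem_univ τ) fun b _ hb => huniq b hb
  -- abbreviation for diagonal values
  set d : Fin (2*K) → ℝ :=
    fun x => if (x : ℕ) < K then ρ x else σ (((x : ℕ) - K)/2) with hd
  have habs : ∀ a, |M (τ a) a| = d (eI (τ a)).1 :=
    fun a => Xmat_abs hKeven hρ hσ (hne a)
  have hcongr : ∀ a, d (eJ a).1 = d (eI (τ a)).1 :=
    fun a => Xmat_hat_congr (hne a)
  have habsdet : |M.det| = ∏ a, d (eI a).1 := by
    rw [hdet2]
    have hsign : |(Equiv.Perm.sign τ • ∏ a, M (τ a) a : ℝ)| = |∏ a, M (τ a) a| := by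
      rcases Int.units_eq_one_or (Equiv.Perm.sign τ) with hs | hs <;>
        rw [hs] <;> simp [Units.smul_def]
    rw [hsign, Finset.abs_prod]
    calc ∏ a, |M (τ a) a| = ∏ a, d (eI (τ a)).1 := by
            exact Finset.prod_congr rfl fun a _ => habs a
      _ = ∏ a, d (eI a).1 := Equiv.prod_comp τ (fun x => d (eI x).1)
  have hII : subDet (Xhat K ρ σ) I I = ∏ a, d (eI a).1 := subDet_diag ρ σ I
  have hJJ : subDet (Xhat K ρ σ) J J = ∏ a, d (eJ a).1 := by
    have := subDet_diag ρ σ J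
    rw [this]
    exact (Fin.prod_congr' _ hJI.symm).symm.trans (Finset.prod_congr rfl fun a _ => rfl)
  constructor
  · rw [habsdet, hII]
  · rw [hII, hJJ]
    calc ∏ a, d (eI a).1 = ∏ a, d (eI (τ a)).1 := (Equiv.prod_comp τ _).symm
      _ = ∏ a, d (eJ a).1 := by exact Finset.prod_congr rfl fun a _ => (hcongr a).symm
end
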